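/- For every real constant c, the equation x = c·φ(x)³ has exactly one real solution, where φ is the standard sigmoid. -/

import Mathlib

noncomputable def phi (z : ℝ) : ℝ := 1 / (1 + Real.exp (-z))

noncomputable def hAux (x : ℝ) : ℝ := x * (1 + Real.exp (-x)) ^ 3

lemma key (x : ℝ) : 3 * x - 1 < Real.exp x := by
  rcases le_or_gt x (1/3) with h | h
  · linarith [Real.exp_pos x]
  · have h1 : x - 1/3 ≤ Real.exp (x - 4/3) := by
      have := Real.add_one_le_exp (x - 4/3)
      linarith
    have h2 : (3 : ℝ) < Real.exp (4/3) := by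
      have e1 : (4 : ℝ)/3 * Real.exp 1 ≤ Real.exp (4/3) := by
        have := Real.add_one_le_exp (1/3 : ℝ)
        calc (4 : ℝ)/3 * Real.exp 1 = (1/3 + 1) * Real.exp 1 := by ring
        _ ≤ Real.exp (1/3) * Real.exp 1 := by
            nlinarith [Real.exp_pos (1 : ℝ)]
        _ = Real.exp (4/3) := by rw [← Real.exp_add]; norm_num
      nlinarith [Real.exp_one_gt_d9]
    have h3 : Real.exp (x - 4/3) * Real.exp (4/3) = Real.exp x := by
      rw [← Real.exp_add]; ring_nf
    nlinarith [Real.exp_pos (x - 4/3)]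

lemma hAux_hasDeriv (x : ℝ) :
    HasDerivAt hAux ((1 + Real.exp (-x)) ^ 3
      + x * (3 * (1 + Real.exp (-x)) ^ 2 * (-Real.exp (-x)))) x := by
  have d1 : HasDerivAt (fun y : ℝ => 1 + Real.exp (-y)) (-Real.exp (-x)) x := by
    have : HasDerivAt (fun y : ℝ => Real.exp (-y)) (Real.exp (-x) * (-1)) x :=
      (Real.hasDerivAt_exp (-x)).comp x (hasDerivAt_neg x)
    simpa using this.const_add 1
  have d2 : HasDerivAt (fun y : ℝ => (1 + Real.exp (-y)) ^ 3)
      (3 * (1 + Real.exp (-x)) ^ 2 * (-Real.exp (-x))) x := by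
    simpa using d1.fun_pow 3
  unfold hAux
  simpa [hAux, mul_comm] using (hasDerivAt_id' x).fun_mul d2

lemma hAux_deriv_pos (x : ℝ) : 0 < deriv hAux x := by
  rw [(hAux_hasDeriv x).deriv]
  set u := Real.exp (-x) with hu
  have hu0 : 0 < u := Real.exp_pos _
  have hk : u * (3 * x - 1) < 1 := by
    have := key x
    have h1 : u * (3 * x - 1) < u * Real.exp x := by
      exact (mul_lt_mul_iff_right₀ hu0).mpr this
    have h2 : u * Real.exp x = 1 := by
      rw [hu, ← Real.exp_add]; simp
    linarith
  nlinarith [sq_nonneg (1 + u), sq_nonneg u, mul_pos hu0 hu0]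

lemma hAux_strictMono : StrictMono hAux :=
  strictMono_of_deriv_pos hAux_deriv_pos

lemma hAux_eq_iff (x c : ℝ) : x = c * (phi x) ^ 3 ↔ hAux x = c := by
  have h1 : 0 < 1 + Real.exp (-x) := by positivity
  rw [phi, hAux]
  rw [div_pow, one_pow]
  constructor
  · intro h
    field_simp at h
    linarith [h]
  · intro h
    field_simp
    linarith [h]

theorem unique_solution_cubed (c : ℝ) : ∃! x : ℝ, x = c * (phi x) ^ 3 := by
  have hcont : Continuous hAux := by
    unfold hAux; continuity
  -- existence via IVT
  have hexists : ∃ x, hAux x = c := by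
    have ha : hAux (min c 0) ≤ c := by
      have h1 : (1 : ℝ) ≤ (1 + Real.exp (-(min c 0))) ^ 3 := by
        have h := Real.exp_pos (-(min c 0)); nlinarith [mul_pos h h, mul_pos (mul_pos h h) h]
      have h2 : min c 0 ≤ 0 := min_le_right _ _
      calc hAux (min c 0) ≤ min c 0 * 1 := by
            unfold hAux
            exact mul_le_mul_of_nonpos_left h1 h2
      _ = min c 0 := mul_one _
      _ ≤ c := min_le_left _ _
    have hb : c ≤ hAux (max c 0) := by
      have h1 : (1 : ℝ) ≤ (1 + Real.exp (-(max c 0))) ^ 3 := by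
        have h := Real.exp_pos (-(max c 0)); nlinarith [mul_pos h h, mul_pos (mul_pos h h) h]
      have h2 : (0 : ℝ) ≤ max c 0 := le_max_right _ _
      calc c ≤ max c 0 := le_max_left _ _
      _ = max c 0 * 1 := (mul_one _).symm
      _ ≤ hAux (max c 0) := by
            unfold hAux
            exact mul_le_mul_of_nonneg_left h1 h2
    have hle : min c 0 ≤ max c 0 := le_trans (min_le_left _ _) (le_max_left _ _)
    obtain ⟨x, _, hx⟩ := intermediate_value_Icc hle hcont.continuousOn ⟨ha, hb⟩
    exact ⟨x, hx⟩
  obtain ⟨x, hx⟩ := hexists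
  refine ⟨x, (hAux_eq_iff x c).mpr hx, fun y hy => ?_⟩
  have hy' := (hAux_eq_iff y c).mp hy
  exact hAux_strictMono.injective (by rw [hx, hy'])
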